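/- The function c_2(u) = N_2(u)/u^{θ_2}, where N_2(u) = #{(m,n): m ≥ n ≥ 0, C(m,n) odd, m+n < u} and θ_2 = log 3/log 2, does not converge as u → ∞; in fact lim_{k→∞} c_2(2^k) = 1/2 and lim_{k→∞} c_2(3·2^k) = 3^{1−θ_2}, and these two values are distinct. -/

import Mathlib

open Filter

/-- `N₂(u)`: number of odd binomial coefficients with `m ≥ n` and `m + n < u`. -/
noncomputable def N2 (u : ℕ) : ℕ :=
  {mn : ℕ × ℕ | mn.2 ≤ mn.1 ∧ mn.1 + mn.2 < u ∧ ¬ 2 ∣ Nat.choose mn.1 mn.2}.ncard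

/-- `θ₂ = log 3 / log 2`. -/
noncomputable def theta2 : ℝ := Real.log 3 / Real.log 2

/-- `c₂(u) = N₂(u)/u^{θ₂}`. -/
noncomputable def c2 (u : ℕ) : ℝ := (N2 u : ℝ) / (u : ℝ) ^ theta2

namespace C2Aux

open Finset

/-! ### Lucas' theorem mod 2 -/

lemma ch2 (n k : ℕ) :
    Nat.choose n k % 2 = (Nat.choose (n%2) (k%2) * Nat.choose (n/2) (k/2)) % 2 := by
  haveI : Fact (Nat.Prime 2) := ⟨Nat.prime_two⟩
  exact Choose.choose_modEq_choose_mod_mul_choose_div_nat (p := 2)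

lemma cEE (a b : ℕ) : Nat.choose (2*a) (2*b) % 2 = Nat.choose a b % 2 := by
  rw [ch2]; simp [Nat.mul_mod_right, Nat.mul_div_cancel_left]
lemma cOE (a b : ℕ) : Nat.choose (2*a+1) (2*b) % 2 = Nat.choose a b % 2 := by
  rw [ch2]; simp [Nat.mul_mod_right, Nat.mul_add_mod, Nat.mul_add_div, Nat.mul_div_cancel_left]
lemma cOO (a b : ℕ) : Nat.choose (2*a+1) (2*b+1) % 2 = Nat.choose a b % 2 := by
  rw [ch2]; simp [Nat.mul_add_mod, Nat.mul_add_div]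
lemma cEO (a b : ℕ) : Nat.choose (2*a) (2*b+1) % 2 = 0 := by
  rw [ch2]; simp [Nat.mul_mod_right, Nat.mul_add_mod]

/-! ### The counting finset and its recursion -/

def Fs (u : ℕ) : Finset (ℕ × ℕ) :=
  (Finset.range u ×ˢ Finset.range u).filter
    fun mn => mn.2 ≤ mn.1 ∧ mn.1 + mn.2 < u ∧ Nat.choose mn.1 mn.2 % 2 = 1

lemma mem_Fs {u : ℕ} {mn : ℕ × ℕ} :
    mn ∈ Fs u ↔ mn.2 ≤ mn.1 ∧ mn.1 + mn.2 < u ∧ Nat.choose mn.1 mn.2 % 2 = 1 := by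
  simp only [Fs, mem_filter, mem_product, mem_range]
  constructor
  · rintro ⟨-, h⟩; exact h
  · rintro ⟨h1, h2, h3⟩; exact ⟨⟨by omega, by omega⟩, h1, h2, h3⟩

lemma inj_ee : Function.Injective (fun p : ℕ × ℕ => (2*p.1, 2*p.2)) := by
  intro p q h; simp only [Prod.ext_iff] at h ⊢; omega
lemma inj_oe : Function.Injective (fun p : ℕ × ℕ => (2*p.1+1, 2*p.2)) := by
  intro p q h; simp only [Prod.ext_iff] at h ⊢; omega
lemma inj_oo : Function.Injective (fun p : ℕ × ℕ => (2*p.1+1, 2*p.2+1)) := by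
  intro p q h; simp only [Prod.ext_iff] at h ⊢; omega

lemma Fs_even (u : ℕ) :
    Fs (2*u) = ((Fs u).image (fun p => (2*p.1, 2*p.2)) ∪
                (Fs u).image (fun p => (2*p.1+1, 2*p.2))) ∪
               (Fs (u-1)).image (fun p => (2*p.1+1, 2*p.2+1)) := by
  ext ⟨m, n⟩
  simp only [mem_union, mem_image, mem_Fs, Prod.ext_iff]
  constructor
  · rintro ⟨h1, h2, h3⟩
    obtain ⟨a, rfl | rfl⟩ := Nat.even_or_odd' m <;> obtain ⟨b, rfl | rfl⟩ := Nat.even_or_odd' n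
    · exact Or.inl (Or.inl ⟨(a, b), ⟨by omega, by omega, by rw [cEE] at h3; exact h3⟩, rfl, rfl⟩)
    · rw [cEO] at h3; omega
    · exact Or.inl (Or.inr ⟨(a, b), ⟨by omega, by omega, by rw [cOE] at h3; exact h3⟩, rfl, rfl⟩)
    · exact Or.inr ⟨(a, b), ⟨by omega, by omega, by rw [cOO] at h3; exact h3⟩, rfl, rfl⟩
  · rintro ((⟨⟨a, b⟩, ⟨h1, h2, h3⟩, rfl, rfl⟩ | ⟨⟨a, b⟩, ⟨h1, h2, h3⟩, rfl, rfl⟩) |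
      ⟨⟨a, b⟩, ⟨h1, h2, h3⟩, rfl, rfl⟩)
    · exact ⟨by omega, by omega, by rw [cEE]; exact h3⟩
    · exact ⟨by omega, by omega, by rw [cOE]; exact h3⟩
    · exact ⟨by omega, by omega, by rw [cOO]; exact h3⟩

lemma Fs_odd (u : ℕ) :
    Fs (2*u+1) = ((Fs (u+1)).image (fun p => (2*p.1, 2*p.2)) ∪
                  (Fs u).image (fun p => (2*p.1+1, 2*p.2))) ∪
                 (Fs u).image (fun p => (2*p.1+1, 2*p.2+1)) := by
  ext ⟨m, n⟩
  simp only [mem_union, mem_image, mem_Fs, Prod.ext_iff]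
  constructor
  · rintro ⟨h1, h2, h3⟩
    obtain ⟨a, rfl | rfl⟩ := Nat.even_or_odd' m <;> obtain ⟨b, rfl | rfl⟩ := Nat.even_or_odd' n
    · exact Or.inl (Or.inl ⟨(a, b), ⟨by omega, by omega, by rw [cEE] at h3; exact h3⟩, rfl, rfl⟩)
    · rw [cEO] at h3; omega
    · exact Or.inl (Or.inr ⟨(a, b), ⟨by omega, by omega, by rw [cOE] at h3; exact h3⟩, rfl, rfl⟩)
    · exact Or.inr ⟨(a, b), ⟨by omega, by omega, by rw [cOO] at h3; exact h3⟩, rfl, rfl⟩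
  · rintro ((⟨⟨a, b⟩, ⟨h1, h2, h3⟩, rfl, rfl⟩ | ⟨⟨a, b⟩, ⟨h1, h2, h3⟩, rfl, rfl⟩) |
      ⟨⟨a, b⟩, ⟨h1, h2, h3⟩, rfl, rfl⟩)
    · exact ⟨by omega, by omega, by rw [cEE]; exact h3⟩
    · exact ⟨by omega, by omega, by rw [cOE]; exact h3⟩
    · exact ⟨by omega, by omega, by rw [cOO]; exact h3⟩

lemma card_Fs_even (u : ℕ) : (Fs (2*u)).card = 2 * (Fs u).card + (Fs (u-1)).card := by
  rw [Fs_even, Finset.card_union_of_disjoint, Finset.card_union_of_disjoint,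
    Finset.card_image_of_injective _ inj_ee, Finset.card_image_of_injective _ inj_oe,
    Finset.card_image_of_injective _ inj_oo]
  · ring
  · rw [Finset.disjoint_left]
    rintro x hx hy
    obtain ⟨p, -, hp⟩ := Finset.mem_image.mp hx
    obtain ⟨q, -, hq⟩ := Finset.mem_image.mp hy
    rw [← hq] at hp; simp only [Prod.ext_iff] at hp; omega
  · rw [Finset.disjoint_left]
    rintro x hx hy
    obtain ⟨q, -, hq⟩ := Finset.mem_image.mp hy
    rcases Finset.mem_union.mp hx with hx | hx <;>
    · obtain ⟨p, -, hp⟩ := Finset.mem_image.mp hx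
      rw [← hq] at hp; simp only [Prod.ext_iff] at hp; omega

lemma card_Fs_odd (u : ℕ) : (Fs (2*u+1)).card = (Fs (u+1)).card + 2 * (Fs u).card := by
  rw [Fs_odd, Finset.card_union_of_disjoint, Finset.card_union_of_disjoint,
    Finset.card_image_of_injective _ inj_ee, Finset.card_image_of_injective _ inj_oe,
    Finset.card_image_of_injective _ inj_oo]
  · ring
  · rw [Finset.disjoint_left]
    rintro x hx hy
    obtain ⟨p, -, hp⟩ := Finset.mem_image.mp hx
    obtain ⟨q, -, hq⟩ := Finset.mem_image.mp hy
    rw [← hq] at hp; simp only [Prod.ext_iff] at hp; omega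
  · rw [Finset.disjoint_left]
    rintro x hx hy
    obtain ⟨q, -, hq⟩ := Finset.mem_image.mp hy
    rcases Finset.mem_union.mp hx with hx | hx <;>
    · obtain ⟨p, -, hp⟩ := Finset.mem_image.mp hx
      rw [← hq] at hp; simp only [Prod.ext_iff] at hp; omega

/-! ### Exact values -/

lemma N2_eq (u : ℕ) : N2 u = (Fs u).card := by
  rw [N2, ← Set.ncard_coe_finset]
  congr 1
  ext mn
  simp only [Set.mem_setOf_eq, Finset.coe_filter, mem_Fs, Finset.mem_coe]
  rw [Nat.two_dvd_ne_zero]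

lemma F_pow2 (k : ℕ) :
    2 * (Fs (2^k)).card = 3^k + 1 ∧ 2 * (Fs (2^k - 1)).card + 2 = 3^k + 1 := by
  induction k with
  | zero => constructor <;> simp <;> decide
  | succ k ih =>
    obtain ⟨h1, h2⟩ := ih
    have hp : 1 ≤ 2^k := Nat.one_le_two_pow
    have e1 : 2^(k+1) = 2 * 2^k := by ring
    have e2 : 2 * 2^k - 1 = 2 * (2^k - 1) + 1 := by omega
    have r1 := card_Fs_even (2^k)
    have r2 := card_Fs_odd (2^k - 1)
    have e3 : 2^k - 1 + 1 = 2^k := by omega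
    rw [e3] at r2
    rw [e1, e2, r1, r2, pow_succ]
    omega

lemma F_3pow2 (k : ℕ) :
    (Fs (3 * 2^k)).card = 3^(k+1) + 1 ∧ (Fs (3 * 2^k - 1)).card = 3^(k+1) - 1 := by
  induction k with
  | zero => constructor <;> decide
  | succ k ih =>
    obtain ⟨h1, h2⟩ := ih
    have hp : 1 ≤ 2^k := Nat.one_le_two_pow
    have hq : 1 ≤ 3^(k+1) := Nat.one_le_pow _ _ (by norm_num)
    have e1 : 3 * 2^(k+1) = 2 * (3 * 2^k) := by ring
    have e2 : 2 * (3 * 2^k) - 1 = 2 * (3 * 2^k - 1) + 1 := by omega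
    have r1 := card_Fs_even (3 * 2^k)
    have r2 := card_Fs_odd (3 * 2^k - 1)
    have e3 : 3 * 2^k - 1 + 1 = 3 * 2^k := by omega
    rw [e3] at r2
    rw [e1, e2, r1, r2, pow_succ 3 (k+1)]
    omega

/-! ### Analytic facts -/

lemma two_rpow_theta2 : (2:ℝ) ^ theta2 = 3 := by
  rw [theta2, Real.rpow_def_of_pos (by norm_num : (0:ℝ) < 2),
    mul_div_cancel₀ _ (ne_of_gt (Real.log_pos (by norm_num)))]
  exact Real.exp_log (by norm_num)

lemma pow2_rpow (k : ℕ) : ((2:ℝ)^k) ^ theta2 = 3^k := by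
  rw [← Real.rpow_natCast 2 k, ← Real.rpow_mul (by norm_num), mul_comm,
    Real.rpow_mul (by norm_num), two_rpow_theta2, Real.rpow_natCast]

lemma three_rpow_pos : (0:ℝ) < (3:ℝ) ^ theta2 := Real.rpow_pos_of_pos (by norm_num) _

lemma half_lt : (1/2 : ℝ) < (3:ℝ) ^ (1 - theta2) := by
  have hl2 : 0 < Real.log 2 := Real.log_pos (by norm_num)
  have hl3 : 0 < Real.log 3 := Real.log_pos (by norm_num)
  have h58 : 5 * Real.log 3 ≤ 8 * Real.log 2 := by
    have := Real.log_le_log (by norm_num : (0:ℝ) < 243) (by norm_num : (243:ℝ) ≤ 256)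
    rw [show (243:ℝ) = 3^(5:ℕ) by norm_num, show (256:ℝ) = 2^(8:ℕ) by norm_num,
      Real.log_pow, Real.log_pow] at this
    push_cast at this
    linarith
  rw [Real.rpow_def_of_pos (by norm_num : (0:ℝ) < 3)]
  have h12 : (1/2 : ℝ) = Real.exp (-Real.log 2) := by
    rw [Real.exp_neg, Real.exp_log (by norm_num : (0:ℝ) < 2)]
    norm_num
  rw [h12]
  apply Real.exp_lt_exp.mpr
  have key : Real.log 3 * (1 - theta2)
      = (Real.log 2 * Real.log 3 - Real.log 3 ^ 2) / Real.log 2 := by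
    rw [theta2]; field_simp
  rw [key, lt_div_iff₀ hl2]
  nlinarith [mul_pos hl2 hl2, mul_pos hl2 hl3, mul_le_mul_of_nonneg_left h58 hl3.le,
    mul_le_mul_of_nonneg_left h58 hl2.le]

lemma tendsto1 : Tendsto (fun k : ℕ => c2 (2 ^ k)) atTop (nhds (1 / 2)) := by
  have hval : ∀ k : ℕ, c2 (2^k) = ((3:ℝ)^k + 1) / 2 / 3^k := by
    intro k
    rw [c2, N2_eq]
    have h1 := (F_pow2 k).1
    have hc : ((Fs (2^k)).card : ℝ) = ((3:ℝ)^k + 1)/2 := by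
      have h2 : (2:ℝ) * ((Fs (2^k)).card : ℝ) = 3^k + 1 := by exact_mod_cast h1
      linarith
    have hd : ((2^k : ℕ) : ℝ) ^ theta2 = (3:ℝ)^k := by
      push_cast
      exact pow2_rpow k
    rw [hc, hd]
  simp only [hval]
  have he : ∀ k : ℕ, ((3:ℝ)^k + 1) / 2 / 3^k = 1/2 + (1/3:ℝ)^k / 2 := by
    intro k
    have h3 : (3:ℝ)^k ≠ 0 := by positivity
    rw [show (1/3:ℝ) = (3:ℝ)⁻¹ by norm_num, inv_pow, div_eq_iff h3]
    field_simp
  simp only [he]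
  have := (tendsto_pow_atTop_nhds_zero_of_lt_one (by norm_num : (0:ℝ) ≤ 1/3)
    (by norm_num : (1/3:ℝ) < 1)).div_const 2
  simpa using tendsto_const_nhds.add this

lemma tendsto2 :
    Tendsto (fun k : ℕ => c2 (3 * 2 ^ k)) atTop (nhds ((3 : ℝ) ^ (1 - theta2))) := by
  have h3t : ((3:ℝ)^theta2) ≠ 0 := ne_of_gt three_rpow_pos
  have hval : ∀ k : ℕ, c2 (3 * 2^k) = ((3:ℝ)^(k+1) + 1) / ((3:ℝ)^theta2 * 3^k) := by
    intro k
    rw [c2, N2_eq]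
    have h1 := (F_3pow2 k).1
    have hc : ((Fs (3 * 2^k)).card : ℝ) = (3:ℝ)^(k+1) + 1 := by exact_mod_cast h1
    have hd : ((3 * 2^k : ℕ) : ℝ) ^ theta2 = (3:ℝ)^theta2 * 3^k := by
      push_cast
      rw [Real.mul_rpow (by norm_num) (by positivity), pow2_rpow]
    rw [hc, hd]
  simp only [hval]
  have hform : (3:ℝ) ^ (1 - theta2) = 3 / (3:ℝ)^theta2 := by
    rw [Real.rpow_sub (by norm_num : (0:ℝ) < 3), Real.rpow_one]
  have he : ∀ k : ℕ, ((3:ℝ)^(k+1) + 1) / ((3:ℝ)^theta2 * 3^k)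
      = 3 / (3:ℝ)^theta2 + (1/3:ℝ)^k / (3:ℝ)^theta2 := by
    intro k
    have hp : (3:ℝ)^k ≠ 0 := by positivity
    rw [show (1/3:ℝ) = (3:ℝ)⁻¹ by norm_num, inv_pow]
    field_simp
    ring
  simp only [he, hform]
  have := (tendsto_pow_atTop_nhds_zero_of_lt_one (by norm_num : (0:ℝ) ≤ 1/3)
    (by norm_num : (1/3:ℝ) < 1)).div_const ((3:ℝ)^theta2)
  simpa using tendsto_const_nhds.add this

end C2Aux

theorem c2_not_convergent :
    Tendsto (fun k : ℕ => c2 (2 ^ k)) atTop (nhds (1 / 2)) ∧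
    Tendsto (fun k : ℕ => c2 (3 * 2 ^ k)) atTop (nhds ((3 : ℝ) ^ (1 - theta2))) ∧
    (3 : ℝ) ^ (1 - theta2) ≠ 1 / 2 ∧
    ¬ ∃ L : ℝ, Tendsto (fun u : ℕ => c2 u) atTop (nhds L) := by
  have hne : (3 : ℝ) ^ (1 - theta2) ≠ 1 / 2 := ne_of_gt C2Aux.half_lt
  refine ⟨C2Aux.tendsto1, C2Aux.tendsto2, hne, ?_⟩
  rintro ⟨L, hL⟩
  have hp : Tendsto (fun k : ℕ => 2^k) atTop atTop :=
    tendsto_pow_atTop_atTop_of_one_lt (by norm_num)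
  have hp3 : Tendsto (fun k : ℕ => 3 * 2^k) atTop atTop :=
    tendsto_atTop_mono (fun k => by nlinarith [Nat.one_le_two_pow (n := k)]) hp
  have e1 : L = 1/2 := tendsto_nhds_unique (hL.comp hp) C2Aux.tendsto1
  have e2 : L = (3:ℝ) ^ (1 - theta2) := tendsto_nhds_unique (hL.comp hp3) C2Aux.tendsto2
  exact hne (e2.symm.trans e1)
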